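/- Let G ⊂ O(4) be the group of order 2p² generated by N₁ = diag(M_p, I₂), N₂ = diag(I₂, M_p), and the swap J of the two ℝ² factors, where M_p is rotation by 2π/p and p an odd prime. Then by Molien's formula the Hilbert series of the invariant ring of G equals (1 + t^p + 2t^{p+2} + 2t^{2p} + t^{2p+2} + t^{3p+2}) / ((1−t²)(1−t⁴)(1−t^{2p})(1−t^p)). -/

import Mathlib

open Real Matrix

/-- The block-diagonal element `N₁^{k₁} N₂^{k₂}` of the group, acting by rotation of
angle `a` on the first `ℝ²` factor and angle `b` on the second. -/
noncomputable def rotBlock (a b : ℝ) : Matrix (Fin 4) (Fin 4) ℝ :=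
  !![Real.cos a, -Real.sin a, 0, 0;
     Real.sin a, Real.cos a, 0, 0;
     0, 0, Real.cos b, -Real.sin b;
     0, 0, Real.sin b, Real.cos b]

/-- The element `J` swapping the two `ℝ²` factors of `ℝ⁴`. -/
def swapJ : Matrix (Fin 4) (Fin 4) ℝ :=
  !![0, 0, 1, 0;
     0, 0, 0, 1;
     1, 0, 0, 0;
     0, 1, 0, 0]

namespace Molien

open Finset

lemma detRot (a b t : ℝ) : (1 - t • rotBlock a b).det
    = (1 - 2*t*Real.cos a + t^2) * (1 - 2*t*Real.cos b + t^2) := by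
  have h : (1 - t • rotBlock a b) =
      !![1 - t*Real.cos a, t*Real.sin a, 0, 0;
         -(t*Real.sin a), 1 - t*Real.cos a, 0, 0;
         0, 0, 1 - t*Real.cos b, t*Real.sin b;
         0, 0, -(t*Real.sin b), 1 - t*Real.cos b] := by
    ext i j
    fin_cases i <;> fin_cases j <;>
      norm_num [rotBlock, Matrix.sub_apply, Matrix.one_apply, Fin.ext_iff,
        Matrix.vecHead, Matrix.vecTail]
  rw [h]
  simp [Matrix.det_succ_row_zero, Fin.sum_univ_succ, Fin.succAbove,
    Matrix.vecHead, Matrix.vecTail]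
  linear_combination (t^2*((1-t*Real.cos b)^2 + t^2*Real.sin b^2)) * sin_sq_add_cos_sq a
    + (t^2*(1 - 2*t*Real.cos a + t^2)) * sin_sq_add_cos_sq b

lemma detSwapRot (a b t : ℝ) : (1 - t • (swapJ * rotBlock a b)).det
    = 1 - 2*(t^2)*Real.cos (a+b) + (t^2)^2 := by
  have h : (1 - t • (swapJ * rotBlock a b)) =
      !![1, 0, -(t*Real.cos b), t*Real.sin b;
         0, 1, -(t*Real.sin b), -(t*Real.cos b);
         -(t*Real.cos a), t*Real.sin a, 1, 0;
         -(t*Real.sin a), -(t*Real.cos a), 0, 1] := by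
    ext i j
    fin_cases i <;> fin_cases j <;>
      norm_num [rotBlock, swapJ, Matrix.mul_apply, Fin.sum_univ_succ, Matrix.sub_apply,
        Matrix.one_apply, Fin.ext_iff]
  rw [h]
  simp [Matrix.det_succ_row_zero, Fin.sum_univ_succ, Fin.succAbove,
    Fin.castSucc, Fin.castAdd, Fin.castLE, Matrix.vecHead, Matrix.vecTail, Real.cos_add]
  linear_combination (t^4*(Real.sin b^2 + Real.cos b^2)) * sin_sq_add_cos_sq a
    + t^4 * sin_sq_add_cos_sq b

variable {p : ℕ}

noncomputable def z (p : ℕ) : ℂ := Complex.exp (2 * Real.pi * Complex.I / p)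

lemma z_pow (hp : 0 < p) : z p ^ p = 1 := by
  rw [z, ← Complex.exp_nat_mul]
  rw [mul_div_cancel₀ _ (by exact_mod_cast hp.ne' : (p:ℂ) ≠ 0)]
  simpa using Complex.exp_nat_mul_two_pi_mul_I 1

lemma z_prim (hp : 0 < p) : IsPrimitiveRoot (z p) p := by
  unfold z
  exact Complex.isPrimitiveRoot_exp p hp.ne'

lemma z_ne_zero (hp : 0 < p) : z p ≠ 0 := Complex.exp_ne_zero _

/-- orthogonality -/
lemma orth (hp : 0 < p) {i j : ℕ} (hi : i < p) (hj : j < p) :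
    ∑ k ∈ range p, (z p ^ i * (z p)⁻¹ ^ j) ^ k = if i = j then (p : ℂ) else 0 := by
  rcases eq_or_ne i j with h | h
  · subst h
    simp [inv_pow, mul_inv_cancel₀ (pow_ne_zero _ (z_ne_zero hp))]
  · rw [if_neg h]
    have hu1 : z p ^ i * (z p)⁻¹ ^ j ≠ 1 := by
      intro hu
      apply h
      refine (z_prim hp).pow_inj hi hj ?_
      field_simp [inv_pow] at hu
      exact (div_eq_one_iff_eq (pow_ne_zero j (z_ne_zero hp))).mp
        (by rwa [one_div, inv_pow, ← div_eq_mul_inv] at hu)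
    rw [geom_sum_eq hu1]
    have hup : (z p ^ i * (z p)⁻¹ ^ j) ^ p = 1 := by
      rw [mul_pow, ← pow_mul, ← pow_mul, mul_comm i p, mul_comm j p, pow_mul, pow_mul,
        z_pow hp, inv_pow, z_pow hp]
      simp
    rw [hup]
    simp

/-- geometric inverse expansion -/
lemma geominv (s w : ℂ) (hsp : s ^ p ≠ 1) (hw : w ^ p = s ^ p) :
    (1 - w)⁻¹ = (∑ i ∈ range p, w ^ i) / (1 - s ^ p) := by
  have hw1 : w ≠ 1 := by rintro rfl; simp at hw; exact hsp hw.symm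
  have h1w : (1 : ℂ) - w ≠ 0 := sub_ne_zero.mpr (Ne.symm hw1)
  have h1s : (1 : ℂ) - s ^ p ≠ 0 := sub_ne_zero.mpr (Ne.symm hsp)
  have h2 : (1 - w) * ∑ i ∈ range p, w ^ i = 1 - s ^ p := by
    linear_combination (-1) * geom_sum_mul w p - hw
  rw [eq_div_iff h1s, ← h2, inv_mul_cancel_left₀ h1w]

lemma zk_pow (hp : 0 < p) (k : ℕ) : (z p ^ k) ^ p = 1 := by
  rw [← pow_mul, mul_comm, pow_mul, z_pow hp, one_pow]

lemma expand (s : ℂ) (hsp : s ^ p ≠ 1) (w : ℂ) (hw : w ^ p = 1) :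
    ((1 - s * w) * (1 - s * w⁻¹))⁻¹
      = (∑ i ∈ range p, ∑ j ∈ range p, s ^ (i + j) * (w ^ i * w⁻¹ ^ j))
          / ((1 - s ^ p) * (1 - s ^ p)) := by
  rw [mul_inv, geominv s _ hsp (by rw [mul_pow, hw, mul_one]),
      geominv s _ hsp (by rw [mul_pow, inv_pow, hw, inv_one, mul_one]),
      div_mul_div_comm, Finset.sum_mul_sum]
  congr 1
  refine Finset.sum_congr rfl fun i _ => Finset.sum_congr rfl fun j _ => ?_
  rw [mul_pow, mul_pow, pow_add]; ring

lemma sumA' (hp : 0 < p) (s : ℂ) (hs2 : s ^ 2 ≠ 1) (hsp : s ^ p ≠ 1) (m : ℕ) :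
    ∑ k ∈ range p, ((1 - s * (z p ^ m * z p ^ k)) * (1 - s * (z p ^ m * z p ^ k)⁻¹))⁻¹
      = p * (1 - (s ^ 2) ^ p) / ((1 - s ^ 2) * ((1 - s ^ p) * (1 - s ^ p))) := by
  have hstep : ∀ k ∈ range p,
      ((1 - s * (z p ^ m * z p ^ k)) * (1 - s * (z p ^ m * z p ^ k)⁻¹))⁻¹
      = (∑ i ∈ range p, ∑ j ∈ range p,
          (s ^ (i + j) * (z p ^ i * (z p)⁻¹ ^ j) ^ m) * (z p ^ i * (z p)⁻¹ ^ j) ^ k)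
          / ((1 - s ^ p) * (1 - s ^ p)) := by
    intro k _
    rw [expand s hsp _ (by rw [mul_pow, zk_pow hp, zk_pow hp, one_mul])]
    congr 1
    refine Finset.sum_congr rfl fun i _ => Finset.sum_congr rfl fun j _ => ?_
    ring
  rw [Finset.sum_congr rfl hstep, ← Finset.sum_div, Finset.sum_comm]
  have hinner : ∀ i ∈ range p,
      (∑ k ∈ range p, ∑ j ∈ range p,
        (s ^ (i + j) * (z p ^ i * (z p)⁻¹ ^ j) ^ m) * (z p ^ i * (z p)⁻¹ ^ j) ^ k)
      = s ^ (i + i) * (p : ℂ) := by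
    intro i hi
    rw [Finset.sum_comm]
    have h1 : ∀ j ∈ range p,
        (∑ k ∈ range p,
          (s ^ (i + j) * (z p ^ i * (z p)⁻¹ ^ j) ^ m) * (z p ^ i * (z p)⁻¹ ^ j) ^ k)
        = if i = j then s ^ (i + j) * (z p ^ i * (z p)⁻¹ ^ j) ^ m * (p : ℂ) else 0 := by
      intro j hj
      rw [← Finset.mul_sum, orth hp (Finset.mem_range.mp hi) (Finset.mem_range.mp hj)]
      split <;> simp
    rw [Finset.sum_congr rfl h1, Finset.sum_ite_eq (range p) i
      (fun j => s ^ (i + j) * (z p ^ i * (z p)⁻¹ ^ j) ^ m * (p : ℂ)), if_pos hi]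
    rw [inv_pow, mul_inv_cancel₀ (pow_ne_zero i (z_ne_zero hp)), one_pow, mul_one]
  rw [Finset.sum_congr rfl hinner]
  have : ∀ i ∈ range p, s ^ (i + i) * (p : ℂ) = (p : ℂ) * (s ^ 2) ^ i := by
    intro i _
    rw [← pow_mul, two_mul]; ring
  rw [Finset.sum_congr rfl this, ← Finset.mul_sum, geom_sum_eq hs2,
    show ((s ^ 2) ^ p - 1) = -(1 - (s ^ 2) ^ p) by ring,
    show (s ^ 2 - 1) = -(1 - s ^ 2) by ring, neg_div_neg_eq,
    mul_div_assoc', div_div]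

lemma sumB (hp : 0 < p) (s : ℂ) (hs2 : s ^ 2 ≠ 1) (hsp : s ^ p ≠ 1) :
    ∑ k₁ ∈ range p, ∑ k₂ ∈ range p,
      ((1 - s * (z p ^ k₁ * z p ^ k₂)) * (1 - s * (z p ^ k₁ * z p ^ k₂)⁻¹))⁻¹
      = p * (p * (1 - (s ^ 2) ^ p)) / ((1 - s ^ 2) * ((1 - s ^ p) * (1 - s ^ p))) := by
  have : ∀ k₁ ∈ range p,
      (∑ k₂ ∈ range p,
        ((1 - s * (z p ^ k₁ * z p ^ k₂)) * (1 - s * (z p ^ k₁ * z p ^ k₂)⁻¹))⁻¹)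
      = p * (1 - (s ^ 2) ^ p) / ((1 - s ^ 2) * ((1 - s ^ p) * (1 - s ^ p))) :=
    fun k₁ _ => sumA' hp s hs2 hsp k₁
  rw [Finset.sum_congr rfl this, Finset.sum_const, Finset.card_range, nsmul_eq_mul]
  ring

lemma castRot (t θ : ℝ) : ((1 - 2*t*Real.cos θ + t^2 : ℝ) : ℂ)
    = (1 - t * Complex.exp (θ * Complex.I)) * (1 - t * (Complex.exp (θ * Complex.I))⁻¹) := by
  have h2c : 2 * Complex.cos θ = Complex.exp (θ * Complex.I) + (Complex.exp (θ * Complex.I))⁻¹ := by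
    rw [Complex.two_cos, ← Complex.exp_neg]; ring_nf
  have he : Complex.exp ((θ:ℂ) * Complex.I) ≠ 0 := Complex.exp_ne_zero _
  have hmul := mul_inv_cancel₀ he
  push_cast
  linear_combination (-(t:ℂ)) * h2c - (t:ℂ)^2 * hmul

lemma expEq (p k : ℕ) (hp : 0 < p) :
    Complex.exp ((((2 * Real.pi * k / p : ℝ)) : ℂ) * Complex.I) = z p ^ k := by
  rw [z, ← Complex.exp_nat_mul]
  congr 1
  push_cast
  have : (p : ℂ) ≠ 0 := by exact_mod_cast hp.ne'
  field_simp

lemma realSumA (hp : 0 < p) (t : ℝ) (hs2 : ((t:ℂ)) ^ 2 ≠ 1) (hsp : ((t:ℂ)) ^ p ≠ 1) :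
    ∑ k ∈ range p, (1 - 2*t*Real.cos (2*π*k/p) + t^2)⁻¹
      = p * (1 - (t^2)^p) / ((1 - t^2) * ((1 - t^p) * (1 - t^p))) := by
  rw [← Complex.ofReal_inj, Complex.ofReal_sum]
  have hterm : ∀ k ∈ range p,
      (((1 - 2*t*Real.cos (2*π*k/p) + t^2)⁻¹ : ℝ) : ℂ)
      = ((1 - (t:ℂ) * (z p ^ 0 * z p ^ k)) * (1 - (t:ℂ) * (z p ^ 0 * z p ^ k)⁻¹))⁻¹ := by
    intro k _
    rw [Complex.ofReal_inv, castRot, expEq p k hp, pow_zero, one_mul]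
  rw [Finset.sum_congr rfl hterm, sumA' hp _ hs2 hsp 0]
  push_cast
  ring

lemma realSumB (hp : 0 < p) (t : ℝ) (hs2 : (((t:ℂ))^2) ^ 2 ≠ 1) (hsp : (((t:ℂ))^2) ^ p ≠ 1) :
    ∑ k₁ ∈ range p, ∑ k₂ ∈ range p,
      (1 - 2*(t^2)*Real.cos (2*π*k₁/p + 2*π*k₂/p) + (t^2)^2)⁻¹
      = p * (p * (1 - ((t^2)^2)^p)) / ((1 - (t^2)^2) * ((1 - (t^2)^p) * (1 - (t^2)^p))) := by
  rw [← Complex.ofReal_inj, Complex.ofReal_sum]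
  have hterm : ∀ k₁ ∈ range p,
      ((∑ k₂ ∈ range p,
        (1 - 2*(t^2)*Real.cos (2*π*k₁/p + 2*π*k₂/p) + (t^2)^2)⁻¹ : ℝ) : ℂ)
      = ∑ k₂ ∈ range p,
        ((1 - ((t:ℂ)^2) * (z p ^ k₁ * z p ^ k₂)) * (1 - ((t:ℂ)^2) * (z p ^ k₁ * z p ^ k₂)⁻¹))⁻¹ := by
    intro k₁ _
    rw [Complex.ofReal_sum]
    refine Finset.sum_congr rfl fun k₂ _ => ?_
    rw [Complex.ofReal_inv, castRot (t^2) (2*π*k₁/p + 2*π*k₂/p)]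
    have hangle : (((2*π*k₁/p + 2*π*k₂/p : ℝ)) : ℂ) * Complex.I
        = (((2*π*k₁/p : ℝ)):ℂ) * Complex.I + (((2*π*k₂/p : ℝ)):ℂ) * Complex.I := by
      push_cast; ring
    rw [hangle, Complex.exp_add, expEq p k₁ hp, expEq p k₂ hp]
    push_cast
    ring
  rw [Finset.sum_congr rfl hterm, sumB hp _ hs2 hsp]
  push_cast
  ring

end Molien

/-- Molien's formula for the group of order `2p²` generated by `N₁`, `N₂` and `J`:
the Hilbert series of its invariant ring, computed as
`(1/|G|) ∑_{g ∈ G} 1/det(Id − t g)`, equals the stated rational function. -/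
theorem stmt19 (p : ℕ) (hp : p.Prime) (hodd : Odd p) (t : ℝ) (ht : |t| < 1) :
    (1 / (2 * (p : ℝ) ^ 2)) *
      ∑ k₁ : Fin p, ∑ k₂ : Fin p,
        (((1 - t • rotBlock (2 * π * k₁ / p) (2 * π * k₂ / p)).det)⁻¹ +
         ((1 - t • (swapJ * rotBlock (2 * π * k₁ / p) (2 * π * k₂ / p))).det)⁻¹)
      = (1 + t ^ p + 2 * t ^ (p + 2) + 2 * t ^ (2 * p) + t ^ (2 * p + 2) + t ^ (3 * p + 2))
        / ((1 - t ^ 2) * (1 - t ^ 4) * (1 - t ^ (2 * p)) * (1 - t ^ p)) := by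
  have hp0 : 0 < p := hp.pos
  -- nonvanishing facts
  have hne : ∀ n : ℕ, n ≠ 0 → t ^ n ≠ 1 := by
    intro n hn h
    have h1 : |t ^ n| < 1 := by
      rw [abs_pow]; exact pow_lt_one₀ (abs_nonneg t) ht hn
    rw [h] at h1; norm_num at h1
  have hneC : ∀ n : ℕ, n ≠ 0 → ((t:ℂ)) ^ n ≠ 1 := by
    intro n hn h
    apply hne n hn
    exact_mod_cast h
  have hd2 : (1:ℝ) - t^2 ≠ 0 := sub_ne_zero.mpr (Ne.symm (hne 2 (by norm_num)))
  have hd4 : (1:ℝ) - t^4 ≠ 0 := sub_ne_zero.mpr (Ne.symm (hne 4 (by norm_num)))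
  have hdp : (1:ℝ) - t^p ≠ 0 := sub_ne_zero.mpr (Ne.symm (hne p hp0.ne'))
  have hd2p : (1:ℝ) - t^(2*p) ≠ 0 := sub_ne_zero.mpr (Ne.symm (hne (2*p) (by positivity)))
  have hpR : (p:ℝ) ≠ 0 := by exact_mod_cast hp0.ne'
  -- rewrite determinants
  have hterm : ∀ k₁ k₂ : Fin p,
      (((1 - t • rotBlock (2 * π * k₁ / p) (2 * π * k₂ / p)).det)⁻¹ +
       ((1 - t • (swapJ * rotBlock (2 * π * k₁ / p) (2 * π * k₂ / p))).det)⁻¹)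
      = (1 - 2*t*Real.cos (2*π*k₁/p) + t^2)⁻¹ * (1 - 2*t*Real.cos (2*π*k₂/p) + t^2)⁻¹
        + (1 - 2*(t^2)*Real.cos (2*π*k₁/p + 2*π*k₂/p) + (t^2)^2)⁻¹ := by
    intro k₁ k₂
    rw [Molien.detRot, Molien.detSwapRot, mul_inv]
  simp only [hterm]
  rw [show (∑ k₁ : Fin p, ∑ k₂ : Fin p,
        ((1 - 2*t*Real.cos (2*π*k₁/p) + t^2)⁻¹ * (1 - 2*t*Real.cos (2*π*k₂/p) + t^2)⁻¹
        + (1 - 2*(t^2)*Real.cos (2*π*k₁/p + 2*π*k₂/p) + (t^2)^2)⁻¹))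
      = (∑ k₁ ∈ Finset.range p, ∑ k₂ ∈ Finset.range p,
        ((1 - 2*t*Real.cos (2*π*k₁/p) + t^2)⁻¹ * (1 - 2*t*Real.cos (2*π*k₂/p) + t^2)⁻¹
        + (1 - 2*(t^2)*Real.cos (2*π*k₁/p + 2*π*k₂/p) + (t^2)^2)⁻¹)) by
    rw [Finset.sum_range fun k₁ => _]
    exact Finset.sum_congr rfl fun k₁ _ => by rw [Finset.sum_range fun k₂ => _]]
  rw [show (∑ k₁ ∈ Finset.range p, ∑ k₂ ∈ Finset.range p,
        ((1 - 2*t*Real.cos (2*π*k₁/p) + t^2)⁻¹ * (1 - 2*t*Real.cos (2*π*k₂/p) + t^2)⁻¹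
        + (1 - 2*(t^2)*Real.cos (2*π*k₁/p + 2*π*k₂/p) + (t^2)^2)⁻¹))
      = (∑ k₁ ∈ Finset.range p, ∑ k₂ ∈ Finset.range p,
          (1 - 2*t*Real.cos (2*π*k₁/p) + t^2)⁻¹ * (1 - 2*t*Real.cos (2*π*k₂/p) + t^2)⁻¹)
        + ∑ k₁ ∈ Finset.range p, ∑ k₂ ∈ Finset.range p,
          (1 - 2*(t^2)*Real.cos (2*π*k₁/p + 2*π*k₂/p) + (t^2)^2)⁻¹ by
    rw [← Finset.sum_add_distrib]
    exact Finset.sum_congr rfl fun k₁ _ => Finset.sum_add_distrib]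
  rw [← Finset.sum_mul_sum]
  rw [Molien.realSumA hp0 t (hneC 2 (by norm_num))
    (by rw [show ((t:ℂ))^p = ((t:ℂ))^p from rfl]; exact hneC p hp0.ne'),
    Molien.realSumB hp0 t (by rw [← pow_mul]; exact hneC 4 (by norm_num))
      (by rw [← pow_mul]; exact hneC (2*p) (by positivity))]
  have e1 : ((t:ℝ)^2)^p = t^(2*p) := by rw [← pow_mul]
  have e2 : ((t:ℝ)^2)^2 = t^4 := by ring
  have e3 : ((t:ℝ)^4)^p = t^(4*p) := by rw [← pow_mul, mul_comm]
  rw [e1, e2, e3]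
  field_simp
  ring
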